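/- Let ℓ be a nonnegative integer and z a complex number with |z| ≤ 1. Then J_ℓ(2z) = (z^ℓ/ℓ!)·e^{−z²/(ℓ+1)}·(1 + O(|z|⁴)), with an absolute implied constant; more precisely, |J_ℓ(2z)·(ℓ!/z^ℓ)·e^{z²/(ℓ+1)} − 1| ≤ C·|z|⁴ for z ≠ 0 and an absolute constant C, and the identity holds trivially at z = 0. -/

import Mathlib

/-- Bessel function of the first kind of order ℓ (complex argument), defined by its
    power series J_ℓ(z) = ∑_{j=0}^∞ (−1)^j/(j!(ℓ+j)!)·(z/2)^{2j+ℓ}. -/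
noncomputable def besselJ (ℓ : ℕ) (z : ℂ) : ℂ :=
  ∑' j : ℕ, ((-1) ^ j / ((j.factorial : ℂ) * ((ℓ + j).factorial : ℂ))) * (z / 2) ^ (2 * j + ℓ)

lemma aux_choose (n : ℕ) (p : ℕ × ℕ) (hp : p ∈ Finset.HasAntidiagonal.antidiagonal n) :
    (1 : ℝ) / (p.1.factorial * p.2.factorial) ≤ 2 ^ n / n.factorial := by
  rw [Finset.HasAntidiagonal.mem_antidiagonal] at hp
  have h1 : p.1 ≤ n := by omega
  have key : n.choose p.1 * (p.1.factorial * p.2.factorial) = n.factorial := by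
    have h2 : p.2 = n - p.1 := by omega
    rw [h2, ← mul_assoc]; exact Nat.choose_mul_factorial_mul_factorial h1
  have hch : n.choose p.1 ≤ 2 ^ n := by
    calc n.choose p.1 ≤ ∑ m ∈ Finset.range (n + 1), n.choose m :=
          Finset.single_le_sum (fun i _ => Nat.zero_le _) (Finset.mem_range.2 (by omega))
      _ = 2 ^ n := Nat.sum_range_choose n
  have hkeyR : (n.choose p.1 : ℝ) * ((p.1.factorial : ℝ) * (p.2.factorial : ℝ)) = n.factorial := by
    exact_mod_cast key
  have hchR : (n.choose p.1 : ℝ) ≤ 2 ^ n := by exact_mod_cast hch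
  have hp1 : (0:ℝ) < p.1.factorial := Nat.cast_pos.2 p.1.factorial_pos
  have hp2 : (0:ℝ) < p.2.factorial := Nat.cast_pos.2 p.2.factorial_pos
  rw [div_le_div_iff₀ (by positivity) (Nat.cast_pos.2 n.factorial_pos)]
  nlinarith [mul_pos hp1 hp2]

set_option maxHeartbeats 1000000 in
/-- For |z| ≤ 1, J_ℓ(2z) = (z^ℓ/ℓ!)·e^{−z²/(ℓ+1)}·(1 + O(|z|⁴)) with an absolute
    implied constant; the identity holds trivially at z = 0. -/
theorem besselJ_two_z_approx :
    (∀ ℓ : ℕ, besselJ ℓ 0 = 0 ^ ℓ / (ℓ.factorial : ℂ)) ∧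
    ∃ C : ℝ, 0 < C ∧ ∀ (ℓ : ℕ) (z : ℂ), ‖z‖ ≤ 1 → z ≠ 0 →
      ‖besselJ ℓ (2 * z) * ((ℓ.factorial : ℂ) / z ^ ℓ)
          * Complex.exp (z ^ 2 / ((ℓ : ℂ) + 1)) - 1‖
        ≤ C * ‖z‖ ^ 4 := by
  constructor
  · intro ℓ
    rw [besselJ, tsum_eq_single 0 ?_]
    · simp [zero_div, inv_mul_eq_div]
    · intro j hj
      rw [zero_div, zero_pow (by omega), mul_zero]
  · set E : ℕ → ℝ := fun n => 2 * 4 ^ (n + 2) / (n + 2).factorial with hE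
    have hEs : Summable E := by
      have h4 : Summable (fun n : ℕ => (4 : ℝ) ^ n / n.factorial) :=
        Real.summable_pow_div_factorial 4
      have := ((summable_nat_add_iff 2).mpr h4).mul_left 2
      simpa [hE, mul_div_assoc] using this
    have hEnn : (0:ℝ) ≤ ∑' n, E n := tsum_nonneg (fun n => by positivity)
    refine ⟨1 + ∑' n, E n, by linarith, ?_⟩
    intro ℓ z hz hz0
    have hzn : (0:ℝ) ≤ ‖z‖ := norm_nonneg z
    have hzpow : ∀ m : ℕ, ‖z‖ ^ m ≤ 1 := fun m => pow_le_one₀ hzn hz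
    set a : ℕ → ℂ := fun j =>
      ((-1) ^ j * (ℓ.factorial : ℂ) / ((j.factorial : ℂ) * ((ℓ + j).factorial : ℂ))) * z ^ (2 * j)
      with ha
    set b : ℕ → ℂ := fun k => (z ^ 2 / ((ℓ : ℂ) + 1)) ^ k / (k.factorial : ℂ) with hb
    have hana : ∀ j, ‖a j‖ ≤ ‖z‖ ^ (2 * j) / j.factorial := by
      intro j
      have hfle : (ℓ.factorial : ℝ) ≤ ((ℓ + j).factorial : ℝ) := by
        exact_mod_cast Nat.factorial_le (Nat.le_add_right ℓ j)
      have hnorm : ‖a j‖ =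
          (ℓ.factorial : ℝ) / ((j.factorial : ℝ) * ((ℓ + j).factorial : ℝ))
            * ‖z‖ ^ (2 * j) := by
        simp [ha, map_mul, map_div₀, map_pow, Complex.norm_natCast]
      rw [hnorm, div_eq_mul_one_div (‖z‖ ^ (2*j)) (j.factorial : ℝ),
        mul_comm (‖z‖ ^ (2*j))]
      apply mul_le_mul_of_nonneg_right _ (by positivity)
      rw [div_le_div_iff₀ (by positivity) (Nat.cast_pos.2 j.factorial_pos)]
      nlinarith [(Nat.cast_pos (α := ℝ)).2 j.factorial_pos, hfle]
    have hbnb : ∀ k, ‖b k‖ ≤ ‖z‖ ^ (2 * k) / k.factorial := by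
      intro k
      have hl1 : (1:ℝ) ≤ ‖((ℓ : ℂ) + 1)‖ := by
        have : ((ℓ : ℂ) + 1) = ((ℓ + 1 : ℕ) : ℂ) := by push_cast; ring
        rw [this, Complex.norm_natCast]
        exact_mod_cast Nat.one_le_iff_ne_zero.2 (Nat.succ_ne_zero ℓ)
      have hnorm : ‖b k‖ = (‖z‖ ^ 2 / ‖((ℓ:ℂ)+1)‖) ^ k / k.factorial := by
        simp [hb, map_div₀, map_pow, Complex.norm_natCast]
      rw [hnorm, div_pow, ← pow_mul]
      have h1 : (1:ℝ) ≤ ‖((ℓ:ℂ)+1)‖ ^ k := one_le_pow₀ hl1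
      gcongr
      exact div_le_self (by positivity) h1
    have hbound : ∀ m : ℕ, ‖z‖ ^ (2*m) / (m.factorial : ℝ) ≤ 1 / m.factorial := by
      intro m
      have h0 : (0:ℝ) < (m.factorial:ℝ) := Nat.cast_pos.2 m.factorial_pos
      rw [div_le_div_iff₀ h0 h0]
      nlinarith [hzpow (2*m)]
    have hone : Summable (fun m : ℕ => 1 / (m.factorial : ℝ)) := by
      simpa using Real.summable_pow_div_factorial 1
    have hA : Summable (fun j => ‖a j‖) :=
      Summable.of_nonneg_of_le (fun j => norm_nonneg _)
        (fun j => (hana j).trans (hbound j)) hone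
    have hB : Summable (fun k => ‖b k‖) :=
      Summable.of_nonneg_of_le (fun k => norm_nonneg _)
        (fun k => (hbnb k).trans (hbound k)) hone
    set d : ℕ → ℂ := fun n => ∑ p ∈ Finset.HasAntidiagonal.antidiagonal n, a p.1 * b p.2 with hd
    have hdn : Summable fun n => ‖d n‖ :=
      summable_norm_sum_mul_antidiagonal_of_summable_norm hA hB
    have hds : Summable d := hdn.of_norm
    have heq : besselJ ℓ (2*z) * ((ℓ.factorial:ℂ)/z^ℓ) * Complex.exp (z^2/((ℓ:ℂ)+1))
        = ∑' n, d n := by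
      have h2z : (2 * z) / 2 = z := by ring
      have hJ : besselJ ℓ (2*z) * ((ℓ.factorial:ℂ)/z^ℓ) = ∑' j, a j := by
        rw [besselJ]
        simp_rw [h2z]
        rw [← tsum_mul_right]
        congr 1
        funext j
        have hfj : ((j.factorial : ℂ)) ≠ 0 := Nat.cast_ne_zero.2 j.factorial_ne_zero
        have hflj : (((ℓ+j).factorial : ℂ)) ≠ 0 := Nat.cast_ne_zero.2 (ℓ+j).factorial_ne_zero
        rw [ha, pow_add]
        field_simp
      have hexp : Complex.exp (z^2/((ℓ:ℂ)+1)) = ∑' k, b k := by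
        rw [Complex.exp_eq_exp_ℂ, NormedSpace.exp_eq_tsum_div]
      rw [hJ, hexp]
      exact tsum_mul_tsum_eq_tsum_sum_antidiagonal_of_summable_norm hA hB
    have hd0 : d 0 = 1 := by
      have hfl : ((ℓ.factorial : ℂ)) ≠ 0 := Nat.cast_ne_zero.2 ℓ.factorial_ne_zero
      simp [hd, ha, hb]
      exact ℓ.factorial_ne_zero
    have hd1 : d 1 = 0 := by
      have hfl : ((ℓ.factorial : ℂ)) ≠ 0 := Nat.cast_ne_zero.2 ℓ.factorial_ne_zero
      have hl0 : ((ℓ : ℂ) + 1) ≠ 0 := by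
        have : ((ℓ : ℂ) + 1) = ((ℓ + 1 : ℕ) : ℂ) := by push_cast; ring
        rw [this]; exact Nat.cast_ne_zero.2 (Nat.succ_ne_zero ℓ)
      have hsucc : (((ℓ+1).factorial : ℂ)) = ((ℓ:ℂ)+1) * (ℓ.factorial : ℂ) := by
        rw [Nat.factorial_succ]; push_cast; ring
      have hanti : Finset.HasAntidiagonal.antidiagonal 1 = {(0,1),(1,0)} := by decide
      show (∑ p ∈ Finset.HasAntidiagonal.antidiagonal 1, a p.1 * b p.2) = 0
      rw [hanti, Finset.sum_pair (by decide)]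
      simp only [ha, hb]
      field_simp [hsucc]
      rw [add_zero, hsucc, mul_div_assoc, mul_div_assoc, div_self hfl]
      ring
    have hsplit : (∑' n, d n) = 1 + ∑' n, d (n+2) := by
      rw [Summable.tsum_eq_zero_add hds, Summable.tsum_eq_zero_add ((summable_nat_add_iff 1).mpr hds)]
      rw [hd0, hd1, zero_add]
    have hterm : ∀ n : ℕ, ‖d (n+2)‖ ≤ E n * ‖z‖ ^ 4 := by
      intro n
      have step1 : ‖d (n+2)‖ ≤ ∑ p ∈ Finset.HasAntidiagonal.antidiagonal (n+2),
          ‖z‖ ^ 4 * (2 ^ (n+2) / ((n+2).factorial : ℝ)) := by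
        refine (norm_sum_le _ _).trans (Finset.sum_le_sum ?_)
        intro p hp
        have hps : p.1 + p.2 = n + 2 := Finset.HasAntidiagonal.mem_antidiagonal.1 hp
        have h1 : ‖a p.1 * b p.2‖ ≤
            (‖z‖ ^ (2*p.1) / p.1.factorial) * (‖z‖ ^ (2*p.2) / p.2.factorial) := by
          rw [norm_mul]
          exact mul_le_mul (hana p.1) (hbnb p.2) (norm_nonneg _)
            (by positivity)
        have h2 : (‖z‖ ^ (2*p.1) / p.1.factorial) * (‖z‖ ^ (2*p.2) / p.2.factorial)
            = ‖z‖ ^ (2*(n+2)) * (1 / ((p.1.factorial : ℝ) * p.2.factorial)) := by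
          rw [← hps]
          rw [div_mul_div_comm, ← pow_add]
          ring_nf
        have h3 : ‖z‖ ^ (2*(n+2)) ≤ ‖z‖ ^ 4 := by
          have : (2*(n+2)) = 4 + 2*n := by ring
          rw [this, pow_add]
          calc ‖z‖ ^ 4 * ‖z‖ ^ (2*n)
              ≤ ‖z‖ ^ 4 * 1 := by gcongr; exact hzpow _
            _ = ‖z‖ ^ 4 := by ring
        refine h1.trans (h2.le.trans ?_)
        exact mul_le_mul h3 (aux_choose (n+2) p hp) (by positivity) (by positivity)
      have step2 : (∑ p ∈ Finset.HasAntidiagonal.antidiagonal (n+2),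
          ‖z‖ ^ 4 * (2 ^ (n+2) / ((n+2).factorial : ℝ)))
          = (n+3) * (‖z‖ ^ 4 * (2 ^ (n+2) / ((n+2).factorial : ℝ))) := by
        rw [Finset.sum_const, Finset.Nat.card_antidiagonal]
        push_cast
        ring
      have step3 : ((n:ℝ)+3) * (‖z‖ ^ 4 * (2 ^ (n+2) / ((n+2).factorial : ℝ)))
          ≤ E n * ‖z‖ ^ 4 := by
        have hfp : (0:ℝ) < ((n+2).factorial : ℝ) := Nat.cast_pos.2 (n+2).factorial_pos
        have hn3 : ((n:ℝ)+3) ≤ 2 ^ (n+3) := by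
          have h : ((n+3 : ℕ) : ℝ) < 2 ^ (n+3) := by exact_mod_cast Nat.lt_two_pow_self (n := n+3)
          push_cast at h; linarith
        have key : ((n:ℝ)+3) * 2 ^ (n+2) ≤ 2 * 4 ^ (n+2) := by
          calc ((n:ℝ)+3) * 2 ^ (n+2) ≤ 2 ^ (n+3) * 2 ^ (n+2) := by
                gcongr
            _ = 2 * 4 ^ (n+2) := by
                rw [show (4:ℝ) = 2^2 by norm_num, ← pow_mul, ← pow_add, ← pow_succ']
                congr 1
                omega
        have hX : (0:ℝ) ≤ ‖z‖ ^ 4 := by positivity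
        have h5 := mul_le_mul_of_nonneg_right key
          (mul_nonneg hX (inv_nonneg.2 hfp.le))
        have e1 : ((n:ℝ)+3) * (‖z‖ ^ 4 * (2 ^ (n+2) / ((n+2).factorial:ℝ)))
            = ((n:ℝ)+3) * 2 ^ (n+2) * (‖z‖ ^ 4 * ((n+2).factorial:ℝ)⁻¹) := by
          field_simp
        have e2 : E n * ‖z‖ ^ 4
            = 2 * 4 ^ (n+2) * (‖z‖ ^ 4 * ((n+2).factorial:ℝ)⁻¹) := by
          simp only [hE]
          field_simp
        rw [e1, e2]
        exact h5
      exact step1.trans (step2.le.trans step3)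
    rw [heq, hsplit, add_sub_cancel_left]
    have hsum2 : Summable fun n => ‖d (n+2)‖ :=
      (summable_nat_add_iff (f := fun n => ‖d n‖) 2).mpr hdn
    calc ‖∑' n, d (n+2)‖ ≤ ∑' n, ‖d (n+2)‖ := norm_tsum_le_tsum_norm hsum2
      _ ≤ ∑' n, E n * ‖z‖ ^ 4 :=
          Summable.tsum_le_tsum hterm hsum2 (hEs.mul_right _)
      _ = (∑' n, E n) * ‖z‖ ^ 4 := tsum_mul_right
      _ ≤ (1 + ∑' n, E n) * ‖z‖ ^ 4 := by
          apply mul_le_mul_of_nonneg_right (by linarith) (by positivity)
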